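/- Let E be a column-finite directed graph with no sinks and {t_e, p_v} a Cuntz-Krieger E-family. For paths μ, ν of equal length with s(μ) = s(ν), define e_{μ,ν} := Σ_{s(e)=r(μ), s(f)=r(ν)} (|s^{-1}(r(μ))||s^{-1}(r(ν))|)^{-1/2} t_{eμ} t_{fν}*. Then these elements satisfy the matrix-unit relations e_{μ,ν} e_{κ,λ} = δ_{ν,κ} e_{μ,λ} and (e_{μ,ν})* = e_{ν,μ}, for paths μ, ν, κ, λ of the same length with s(μ)=s(ν) and s(κ)=s(λ). -/

import Mathlib

/-- `μ : Fin k → E1` is a path (edges composing left-to-right as `μ₁μ₂⋯μ_k` with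
`s(μᵢ) = r(μᵢ₊₁)`) from source vertex `v` (the source of the last edge) to range vertex
`w` (the range of the first edge); a path of length `0` is a vertex, and then `v = w`. -/
structure IsPathFromTo {E0 E1 : Type*} (r s : E1 → E0) {k : ℕ}
    (μ : Fin k → E1) (v w : E0) : Prop where
  chain : ∀ (i : ℕ) (h : i + 1 < k), s (μ ⟨i, by omega⟩) = r (μ ⟨i + 1, h⟩)
  rng : ∀ h : 0 < k, r (μ ⟨0, h⟩) = w
  src : ∀ h : 0 < k, s (μ ⟨k - 1, by omega⟩) = v
  deg : k = 0 → w = v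

/-- The partial isometry `t_μ = t_{μ₁} ⋯ t_{μ_k}` associated to a path `μ` with range
vertex `w`; for a genuine path the leading factor `p w` is redundant, and for the empty
path (a vertex) `t_μ = p w`. -/
def tPath {E0 E1 B : Type*} [Monoid B] (p : E0 → B) (t : E1 → B) {k : ℕ}
    (w : E0) (μ : Fin k → E1) : B :=
  p w * (List.ofFn fun i => t (μ i)).prod


/-- For a Cuntz–Krieger family on a column-finite graph with no sinks, the elements
`e_{μ,ν} := ∑_{s(e)=r(μ), s(f)=r(ν)} (|s⁻¹(r μ)| |s⁻¹(r ν)|)^{-1/2} t_{eμ} t_{fν}*`. -/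
noncomputable def eUnit {E0 E1 B : Type*} [Ring B] [Algebra ℂ B] [StarRing B]
    (r s : E1 → E0) (p : E0 → B) (t : E1 → B) (sfin : E0 → Finset E1) {k : ℕ}
    (wμ wν : E0) (μ ν : Fin k → E1) : B :=
  ∑ e ∈ sfin wμ, ∑ f ∈ sfin wν,
    ((Real.sqrt (((sfin wμ).card : ℝ) * ((sfin wν).card : ℝ)) : ℂ))⁻¹ •
      (tPath p t (r e) (Fin.cons e μ) * star (tPath p t (r f) (Fin.cons f ν)))

section Aux

variable {E0 E1 B : Type*} [CStarAlgebra B]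
variable {r s : E1 → E0} {p : E0 → B} {t : E1 → B}

lemma absorb (x q : B) (hx : star x * x = q) (hq : q * q = q) (hq' : star q = q) :
    x * q = x := by
  have e1 : star (x * q - x) = q * star x - star x := by
    rw [star_sub, star_mul, hq']
  have e2 : star x * (x * q) = q := by rw [← mul_assoc, hx, hq]
  have h0 : star (x * q - x) * (x * q - x) = 0 := by
    rw [e1, sub_mul, mul_sub, mul_sub, mul_assoc q, e2, mul_assoc q, hx, hq]
    simp
  have := (CStarRing.star_mul_self_eq_zero_iff _).mp h0
  rwa [sub_eq_zero] at this

lemma tail_path {k : ℕ} {μ : Fin (k + 1) → E1} {v w : E0}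
    (h : IsPathFromTo r s μ v w) : IsPathFromTo r s (Fin.tail μ) v (s (μ 0)) where
  chain i hi := by
    have h2 := h.chain (i + 1) (by omega)
    simpa only [Fin.tail, Fin.succ_mk] using h2
  rng hk := by
    have h2 := h.chain 0 (by omega)
    have h0 : (0 : Fin (k + 1)) = ⟨0, by omega⟩ := by ext; simp
    simp only [Fin.tail, Fin.succ_mk, h0]
    exact h2.symm
  src hk := by
    have h2 := h.src (by omega)
    have hidx : (Fin.succ ⟨k - 1, by omega⟩ : Fin (k + 1)) = ⟨k + 1 - 1, by omega⟩ := by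
      ext; simp; omega
    simp only [Fin.tail, hidx]
    exact h2
  deg hk := by
    subst hk
    have h2 := h.src (by omega)
    have h0 : (0 : Fin 1) = ⟨0 + 1 - 1, by omega⟩ := by ext; simp
    rw [h0]
    exact h2

lemma cons_path {k : ℕ} {μ : Fin k → E1} {v w : E0} (h : IsPathFromTo r s μ v w)
    {e : E1} (he : s e = w) : IsPathFromTo r s (Fin.cons e μ) v (r e) where
  chain i hi := by
    cases i with
    | zero =>
      have hk : 0 < k := by omega
      have h0 : (⟨0, by omega⟩ : Fin (k + 1)) = 0 := by ext; simp
      have h1 : (⟨0 + 1, hi⟩ : Fin (k + 1)) = Fin.succ ⟨0, hk⟩ := by ext; simp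
      rw [h0, h1, Fin.cons_zero, Fin.cons_succ, he, h.rng hk]
    | succ i =>
      have h1 : (⟨i + 1, by omega⟩ : Fin (k + 1)) = Fin.succ ⟨i, by omega⟩ := by ext; simp
      have h2 : (⟨i + 1 + 1, hi⟩ : Fin (k + 1)) = Fin.succ ⟨i + 1, by omega⟩ := by ext; simp
      rw [h1, h2, Fin.cons_succ, Fin.cons_succ]
      exact h.chain i (by omega)
  rng hk := by
    have h0 : (⟨0, hk⟩ : Fin (k + 1)) = 0 := by ext; simp
    rw [h0, Fin.cons_zero]
  src hk := by
    cases k with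
    | zero =>
      have h0 : (⟨0 + 1 - 1, by omega⟩ : Fin 1) = 0 := by ext; simp
      rw [h0, Fin.cons_zero, he, h.deg rfl]
    | succ m =>
      have h1 : (⟨m + 1 + 1 - 1, by omega⟩ : Fin (m + 1 + 1)) = Fin.succ ⟨m, by omega⟩ := by
        ext; simp
      rw [h1, Fin.cons_succ]
      have h2 := h.src (by omega)
      have h3 : (⟨m, by omega⟩ : Fin (m + 1)) = ⟨m + 1 - 1, by omega⟩ := by ext; simp
      rw [h3]
      exact h2
  deg hk := by omega

lemma tPath_succ {k : ℕ}
    (habs : ∀ e : E1, t e * p (s e) = t e) (w : E0) (μ : Fin (k + 1) → E1) :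
    tPath p t w μ = p w * (t (μ 0) * tPath p t (s (μ 0)) (Fin.tail μ)) := by
  simp only [tPath, List.ofFn_succ, List.prod_cons, Fin.tail]
  conv_rhs => rw [← mul_assoc (t (μ 0)), habs]

open Classical in
lemma key_lemma
    (hproj : ∀ v, p v * p v = p v ∧ star (p v) = p v)
    (horthp : ∀ v w, v ≠ w → p v * p w = 0)
    (hisom : ∀ e, star (t e) * t e = p (s e))
    (hrange : ∀ e, p (r e) * t e = t e)
    (horth : ∀ e f, e ≠ f → star (t e) * t f = 0) :
    ∀ {k : ℕ} (ν κ : Fin k → E1) (vν wν vκ wκ : E0),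
      IsPathFromTo r s ν vν wν → IsPathFromTo r s κ vκ wκ →
      star (tPath p t wν ν) * tPath p t wκ κ =
        if ν = κ ∧ wν = wκ then p vν else 0 := by
  have habs : ∀ e : E1, t e * p (s e) = t e := fun e =>
    absorb _ _ (hisom e) (hproj _).1 (hproj _).2
  intro k
  induction k with
  | zero =>
    intro ν κ vν wν vκ wκ hν hκ
    have hνκ : ν = κ := funext fun i => i.elim0
    simp only [tPath, List.ofFn_zero, List.prod_nil, mul_one, (hproj wν).2]
    by_cases hw : wν = wκ
    · subst hw
      rw [if_pos ⟨hνκ, rfl⟩, hν.deg rfl, (hproj _).1]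
    · rw [if_neg (by tauto), horthp _ _ hw]
  | succ k ih =>
    intro ν κ vν wν vκ wκ hν hκ
    rw [tPath_succ habs wν ν, tPath_succ habs wκ κ]
    by_cases hw : wν = wκ
    · subst hw
      have h00 : (0 : Fin (k + 1)) = ⟨0, by omega⟩ := by ext; simp
      have hpκ : p wν * t (κ 0) = t (κ 0) := by
        conv_lhs => rw [← hκ.rng (by omega), ← h00]
        exact hrange (κ 0)
      have hstep : star (p wν * (t (ν 0) * tPath p t (s (ν 0)) (Fin.tail ν))) *
            (p wν * (t (κ 0) * tPath p t (s (κ 0)) (Fin.tail κ)))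
          = star (tPath p t (s (ν 0)) (Fin.tail ν)) *
              (star (t (ν 0)) * (t (κ 0) * tPath p t (s (κ 0)) (Fin.tail κ))) := by
        simp only [star_mul, (hproj _).2, mul_assoc]
        rw [← mul_assoc (p wν) (p wν), (hproj wν).1, ← mul_assoc (p wν) (t (κ 0)), hpκ]
      rw [hstep]
      by_cases h0 : ν 0 = κ 0
      · rw [← mul_assoc (star (t (ν 0))), ← h0, hisom]
        have habs2 : p (s (ν 0)) * tPath p t (s (ν 0)) (Fin.tail κ) =
            tPath p t (s (ν 0)) (Fin.tail κ) := by
          rw [tPath, ← mul_assoc, (hproj _).1]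
        rw [habs2]
        have hκt := tail_path hκ
        rw [← h0] at hκt
        rw [ih _ _ _ _ _ _ (tail_path hν) hκt]
        refine if_congr ?_ rfl rfl
        constructor
        · rintro ⟨ht, -⟩
          refine ⟨?_, rfl⟩
          have hν' : ν = Fin.cons (ν 0) (Fin.tail ν) := (Fin.cons_self_tail ν).symm
          rw [hν', ht, h0, Fin.cons_self_tail]
        · rintro ⟨hq, -⟩
          exact ⟨by rw [hq], rfl⟩
      · rw [← mul_assoc (star (t (ν 0))), horth _ _ h0, zero_mul, mul_zero,
          if_neg (by rintro ⟨hq, -⟩; exact h0 (by rw [hq]))]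
    · rw [if_neg (by tauto)]
      have hstep : star (p wν * (t (ν 0) * tPath p t (s (ν 0)) (Fin.tail ν))) *
            (p wκ * (t (κ 0) * tPath p t (s (κ 0)) (Fin.tail κ)))
          = star (tPath p t (s (ν 0)) (Fin.tail ν)) * (star (t (ν 0)) *
              ((p wν * p wκ) * (t (κ 0) * tPath p t (s (κ 0)) (Fin.tail κ)))) := by
        simp only [star_mul, (hproj _).2, mul_assoc]
      rw [hstep, horthp _ _ hw]
      simp

end Aux

/-- Let `E` be a column-finite directed graph with no sinks and `{t_e, p_v}` a
Cuntz–Krieger `E`-family.  For paths `μ, ν, κ, λ` of a common length with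
`s(μ) = s(ν)` and `s(κ) = s(λ)`, the elements `e_{μ,ν}` satisfy the matrix-unit
relations `e_{μ,ν} e_{κ,λ} = δ_{ν,κ} e_{μ,λ}` and `(e_{μ,ν})* = e_{ν,μ}`. -/
theorem stmt12 {E0 E1 B : Type*} [CStarAlgebra B]
    (r s : E1 → E0) (p : E0 → B) (t : E1 → B)
    (sfin : E0 → Finset E1)
    (hsfin : ∀ v e, e ∈ sfin v ↔ s e = v)
    (hnosink : ∀ v, (sfin v).Nonempty)
    (hproj : ∀ v, p v * p v = p v ∧ star (p v) = p v)
    (horthp : ∀ v w, v ≠ w → p v * p w = 0)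
    (hisom : ∀ e, star (t e) * t e = p (s e))
    (hrange : ∀ e, p (r e) * t e = t e)
    (horth : ∀ e f, e ≠ f → star (t e) * t f = 0)
    (k : ℕ) (vμν vkl : E0)
    (μ ν κ lam : Fin k → E1) (wμ wν wκ wl : E0)
    (hμ : IsPathFromTo r s μ vμν wμ) (hν : IsPathFromTo r s ν vμν wν)
    (hκ : IsPathFromTo r s κ vkl wκ) (hl : IsPathFromTo r s lam vkl wl) :
    ((ν = κ ∧ wν = wκ) →
      eUnit r s p t sfin wμ wν μ ν * eUnit r s p t sfin wκ wl κ lam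
        = eUnit r s p t sfin wμ wl μ lam) ∧
    (¬(ν = κ ∧ wν = wκ) →
      eUnit r s p t sfin wμ wν μ ν * eUnit r s p t sfin wκ wl κ lam = 0) ∧
    star (eUnit r s p t sfin wμ wν μ ν) = eUnit r s p t sfin wν wμ ν μ := by
  classical
  have hkey := key_lemma (r := r) (s := s) (p := p) (t := t) hproj horthp hisom hrange horth (k := k + 1)
  have key4 : ∀ f ∈ sfin wν, ∀ g ∈ sfin wκ,
      star (tPath p t (r f) (Fin.cons f ν)) * tPath p t (r g) (Fin.cons g κ)
        = if f = g ∧ ν = κ then p vμν else 0 := by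
    intro f hf g hg
    rw [hkey _ _ vμν _ vkl _ (cons_path hν ((hsfin wν f).mp hf))
      (cons_path hκ ((hsfin wκ g).mp hg))]
    refine if_congr ?_ rfl rfl
    constructor
    · rintro ⟨hc, -⟩
      have hf0 : f = g := by simpa using congrFun hc 0
      refine ⟨hf0, funext fun i => ?_⟩
      simpa using congrFun hc i.succ
    · rintro ⟨h1, h2⟩
      subst h1; subst h2
      exact ⟨rfl, rfl⟩
  have hexp : eUnit r s p t sfin wμ wν μ ν * eUnit r s p t sfin wκ wl κ lam
      = ∑ e ∈ sfin wμ, ∑ f ∈ sfin wν, ∑ g ∈ sfin wκ, ∑ h ∈ sfin wl,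
          (((Real.sqrt (((sfin wμ).card : ℝ) * ((sfin wν).card : ℝ)) : ℂ))⁻¹ *
           ((Real.sqrt (((sfin wκ).card : ℝ) * ((sfin wl).card : ℝ)) : ℂ))⁻¹) •
          (tPath p t (r e) (Fin.cons e μ) *
            (star (tPath p t (r f) (Fin.cons f ν)) * tPath p t (r g) (Fin.cons g κ)) *
            star (tPath p t (r h) (Fin.cons h lam))) := by
    rw [eUnit, eUnit, Finset.sum_mul]
    refine Finset.sum_congr rfl fun e he => ?_
    rw [Finset.sum_mul]
    refine Finset.sum_congr rfl fun f hf => ?_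
    rw [Finset.mul_sum]
    refine Finset.sum_congr rfl fun g hg => ?_
    rw [Finset.mul_sum]
    refine Finset.sum_congr rfl fun h hh => ?_
    rw [Algebra.smul_mul_assoc, Algebra.mul_smul_comm, smul_smul]
    congr 1
    simp only [mul_assoc]
  refine ⟨?_, ?_, ?_⟩
  · rintro ⟨hνκ, hw⟩
    subst hνκ; subst hw
    have hscalar : (((sfin wν).card : ℂ)) *
        (((Real.sqrt (((sfin wμ).card : ℝ) * ((sfin wν).card : ℝ)) : ℂ))⁻¹ *
         ((Real.sqrt (((sfin wν).card : ℝ) * ((sfin wl).card : ℝ)) : ℂ))⁻¹)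
        = ((Real.sqrt (((sfin wμ).card : ℝ) * ((sfin wl).card : ℝ)) : ℂ))⁻¹ := by
      have ha : (0 : ℝ) < ((sfin wμ).card : ℝ) := by
        exact_mod_cast Finset.card_pos.mpr (hnosink wμ)
      have hn : (0 : ℝ) < ((sfin wν).card : ℝ) := by
        exact_mod_cast Finset.card_pos.mpr (hnosink wν)
      have hb : (0 : ℝ) < ((sfin wl).card : ℝ) := by
        exact_mod_cast Finset.card_pos.mpr (hnosink wl)
      have hr : (((sfin wν).card : ℝ)) *
          ((Real.sqrt (((sfin wμ).card : ℝ) * ((sfin wν).card : ℝ)))⁻¹ *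
           (Real.sqrt (((sfin wν).card : ℝ) * ((sfin wl).card : ℝ)))⁻¹)
          = (Real.sqrt (((sfin wμ).card : ℝ) * ((sfin wl).card : ℝ)))⁻¹ := by
        rw [Real.sqrt_mul ha.le, Real.sqrt_mul hn.le, Real.sqrt_mul ha.le]
        have hsa := Real.sqrt_pos.mpr ha
        have hsn := Real.sqrt_pos.mpr hn
        have hsb := Real.sqrt_pos.mpr hb
        have hnn : Real.sqrt ((sfin wν).card : ℝ) * Real.sqrt ((sfin wν).card : ℝ)
            = ((sfin wν).card : ℝ) := Real.mul_self_sqrt hn.le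
        field_simp
        linear_combination (-1 : ℝ) * hnn
      exact_mod_cast hr
    rw [hexp, eUnit]
    refine Finset.sum_congr rfl fun e he => ?_
    have hAe : tPath p t (r e) (Fin.cons e μ) * p vμν = tPath p t (r e) (Fin.cons e μ) := by
      refine absorb _ _ ?_ (hproj _).1 (hproj _).2
      rw [hkey _ _ vμν _ vμν _ (cons_path hμ ((hsfin wμ e).mp he))
        (cons_path hμ ((hsfin wμ e).mp he)), if_pos ⟨rfl, rfl⟩]
    calc ∑ f ∈ sfin wν, ∑ g ∈ sfin wν, ∑ h ∈ sfin wl,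
          (((Real.sqrt (((sfin wμ).card : ℝ) * ((sfin wν).card : ℝ)) : ℂ))⁻¹ *
           ((Real.sqrt (((sfin wν).card : ℝ) * ((sfin wl).card : ℝ)) : ℂ))⁻¹) •
          (tPath p t (r e) (Fin.cons e μ) *
            (star (tPath p t (r f) (Fin.cons f ν)) * tPath p t (r g) (Fin.cons g ν)) *
            star (tPath p t (r h) (Fin.cons h lam)))
        = ∑ f ∈ sfin wν, ∑ g ∈ sfin wν, ∑ h ∈ sfin wl,
            (if f = g then
              (((Real.sqrt (((sfin wμ).card : ℝ) * ((sfin wν).card : ℝ)) : ℂ))⁻¹ *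
               ((Real.sqrt (((sfin wν).card : ℝ) * ((sfin wl).card : ℝ)) : ℂ))⁻¹) •
              (tPath p t (r e) (Fin.cons e μ) * star (tPath p t (r h) (Fin.cons h lam)))
             else 0) := by
          refine Finset.sum_congr rfl fun f hf => Finset.sum_congr rfl fun g hg =>
            Finset.sum_congr rfl fun h hh => ?_
          rw [key4 f hf g hg]
          by_cases hfg : f = g
          · rw [if_pos ⟨hfg, rfl⟩, if_pos hfg, hAe]
          · rw [if_neg (by tauto), if_neg hfg, mul_zero, zero_mul, smul_zero]
      _ = ∑ f ∈ sfin wν, ∑ h ∈ sfin wl,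
            (((Real.sqrt (((sfin wμ).card : ℝ) * ((sfin wν).card : ℝ)) : ℂ))⁻¹ *
             ((Real.sqrt (((sfin wν).card : ℝ) * ((sfin wl).card : ℝ)) : ℂ))⁻¹) •
            (tPath p t (r e) (Fin.cons e μ) * star (tPath p t (r h) (Fin.cons h lam))) := by
          refine Finset.sum_congr rfl fun f hf => ?_
          rw [Finset.sum_comm]
          refine Finset.sum_congr rfl fun h hh => ?_
          rw [Finset.sum_ite_eq]
          exact if_pos hf
      _ = ∑ h ∈ sfin wl,
            ((Real.sqrt (((sfin wμ).card : ℝ) * ((sfin wl).card : ℝ)) : ℂ))⁻¹ •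
            (tPath p t (r e) (Fin.cons e μ) * star (tPath p t (r h) (Fin.cons h lam))) := by
          rw [Finset.sum_const, ← Nat.cast_smul_eq_nsmul ℂ, Finset.smul_sum]
          refine Finset.sum_congr rfl fun h hh => ?_
          rw [smul_smul, hscalar]
  · intro hcon
    rw [hexp]
    refine Finset.sum_eq_zero fun e he => Finset.sum_eq_zero fun f hf =>
      Finset.sum_eq_zero fun g hg => Finset.sum_eq_zero fun h hh => ?_
    rw [key4 f hf g hg, if_neg, mul_zero, zero_mul, smul_zero]
    rintro ⟨hfg, hνκ⟩
    exact hcon ⟨hνκ, by rw [← (hsfin wν f).mp hf, ← (hsfin wκ g).mp hg, hfg]⟩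
  · rw [eUnit, eUnit]
    conv_rhs => rw [Finset.sum_comm]
    simp only [star_sum, star_smul, star_mul, star_star]
    refine Finset.sum_congr rfl fun e he => Finset.sum_congr rfl fun f hf => ?_
    congr 1
    rw [mul_comm (((sfin wμ).card : ℝ))]
    simp [star_inv₀, Complex.star_def, Complex.conj_ofReal]
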